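/- Let â(z) = â_n ∏_{j=0}^{m} (z − z_j)^{k_j} with distinct roots z_j, k_0 + … + k_m = n, and suppose â(z) and â(−z) are relatively prime (equivalently z_i ≠ 0 and z_i ≠ −z_j for all i,j). Then the unique polynomial solution p_t^⋆(z) of degree < n of â(z)p_t^⋆(z) ⋆ â(−z)p_t^⋆(−z) = 2z^{2t−ℓ^⋆} admits the explicit representation p_t^⋆(z) = (−1)^{ℓ^⋆} â_n^{−1} ∏_{j=0}^{m}(z+z_j)^{k_j} · Σ_{i=0}^{m} Σ_{s=1}^{k_i} (−1)^s c_{i,k_i−s}/(z+z_i)^s, where c_{i,j} = (1/j!) d^j/dz^j [ 2z^{2t−ℓ^⋆} / ω_i(z) ] evaluated at z = z_i, ω(z) is the monic polynomial associated with â(z)â(−z), and ω_i(z) = ω(z)/(z−z_i)^{k_i}. -/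

import Mathlib

open Polynomial Topology


private lemma iteratedDeriv_polyEval (q : Polynomial ℂ) (n : ℕ) :
    iteratedDeriv n (fun w : ℂ => q.eval w) = fun w => ((⇑derivative)^[n] q).eval w := by
  induction n generalizing q with
  | zero => simp
  | succ n ih =>
    rw [iteratedDeriv_succ']
    have h : (deriv fun w : ℂ => q.eval w) = fun w => q.derivative.eval w := by
      funext w; exact q.deriv
    rw [h, ih, Function.iterate_succ_apply]

private lemma analyticOnNhd_polyEval (q : Polynomial ℂ) (s : Set ℂ) :
    AnalyticOnNhd ℂ (fun w : ℂ => q.eval w) s := by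
  intro x _
  have h := (analyticAt_id (𝕜 := ℂ) (z := x)).aeval_polynomial q
  have : (fun w : ℂ => Polynomial.aeval (id w) q) = fun w : ℂ => q.eval w := by
    funext w; simp [Polynomial.aeval_def, Polynomial.eval₂_eq_eval_map]
  rwa [this] at h

private lemma dvd_of_iterated_deriv_eval_zero (q : Polynomial ℂ) (a : ℂ) (m : ℕ)
    (h : ∀ j < m, ((⇑derivative)^[j] q).eval a = 0) : (X - C a) ^ m ∣ q := by
  have h2 : (X : ℂ[X]) ^ m ∣ Polynomial.taylor a q := by
    rw [Polynomial.X_pow_dvd_iff]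
    intro d hd
    rw [Polynomial.taylor_coeff]
    have h3 := congrFun (Polynomial.factorial_smul_hasseDeriv (R := ℂ) d) q
    simp only [LinearMap.smul_apply] at h3
    have h4 : (d.factorial • Polynomial.hasseDeriv d q).eval a = 0 := by
      rw [h3]; exact h d hd
    rw [Polynomial.eval_smul, nsmul_eq_mul] at h4
    have : ((d.factorial : ℂ)) ≠ 0 := Nat.cast_ne_zero.mpr d.factorial_ne_zero
    exact (mul_eq_zero.mp h4).resolve_left this
  obtain ⟨r, hr⟩ := h2
  rw [Polynomial.taylor_apply] at hr
  have := congrArg (fun p : ℂ[X] => p.comp (X - C a)) hr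
  simp only [Polynomial.comp_assoc] at this
  simp only [Polynomial.add_comp, Polynomial.X_comp, Polynomial.C_comp, Polynomial.mul_comp,
    Polynomial.pow_comp, sub_add_cancel, Polynomial.comp_X] at this
  exact ⟨r.comp (X - C a), this⟩

private lemma iterated_deriv_taylor_poly (a : ℂ) (m : ℕ) (co : ℕ → ℂ) (j : ℕ) (hj : j < m) :
    ((⇑derivative)^[j] (∑ i ∈ Finset.range m, C (co i) * (X - C a) ^ i)).eval a
      = (j.factorial : ℂ) * co j := by
  set T : ℂ[X] := ∑ i ∈ Finset.range m, C (co i) * (X - C a) ^ i with hT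
  have h3 := congrFun (Polynomial.factorial_smul_hasseDeriv (R := ℂ) j) T
  simp only [LinearMap.smul_apply] at h3
  have : ((⇑derivative)^[j] T).eval a = (j.factorial • Polynomial.hasseDeriv j T).eval a := by
    rw [h3]
  rw [this, Polynomial.eval_smul, nsmul_eq_mul]
  have h5 : (Polynomial.hasseDeriv j T).eval a = (Polynomial.taylor a T).coeff j := by
    rw [Polynomial.taylor_coeff]
  rw [h5]
  have h6 : Polynomial.taylor a T = ∑ i ∈ Finset.range m, C (co i) * X ^ i := by
    rw [hT, map_sum]
    refine Finset.sum_congr rfl fun i _ => ?_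
    rw [Polynomial.taylor_apply, Polynomial.mul_comp, Polynomial.C_comp, Polynomial.pow_comp,
      Polynomial.sub_comp, Polynomial.X_comp, Polynomial.C_comp, add_sub_cancel_right]
  rw [h6]
  rw [Polynomial.finset_sum_coeff]
  simp only [Polynomial.coeff_C_mul, Polynomial.coeff_X_pow]
  rw [Finset.sum_eq_single j]
  · simp
  · intro b _ hbj; rw [if_neg (Ne.symm hbj), mul_zero]
  · intro hjm; exact absurd (Finset.mem_range.mpr hj) hjm

private lemma iteratedDerivWithin_isOpen {s : Set ℂ} (hs : IsOpen s) {x : ℂ} (hx : x ∈ s)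
    (f : ℂ → ℂ) (n : ℕ) : iteratedDerivWithin n f s x = iteratedDeriv n f x := by
  rw [iteratedDerivWithin_eq_iteratedFDerivWithin, iteratedDeriv_eq_iteratedFDeriv,
    iteratedFDerivWithin_of_isOpen n hs hx]

private lemma iteratedDeriv_add_an {s : Set ℂ} (hs : IsOpen s) {x : ℂ} (hx : x ∈ s)
    {f g : ℂ → ℂ} (hf : AnalyticOnNhd ℂ f s) (hg : AnalyticOnNhd ℂ g s) (n : ℕ) :
    iteratedDeriv n (fun w => f w + g w) x = iteratedDeriv n f x + iteratedDeriv n g x := by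
  rw [← iteratedDerivWithin_isOpen hs hx, ← iteratedDerivWithin_isOpen hs hx f,
    ← iteratedDerivWithin_isOpen hs hx g]
  exact iteratedDerivWithin_add hx hs.uniqueDiffOn
    ((hf.analyticOn.contDiffOn hs.uniqueDiffOn) x hx) ((hg.analyticOn.contDiffOn hs.uniqueDiffOn) x hx)

private lemma iteratedDeriv_sub_an {s : Set ℂ} (hs : IsOpen s) {x : ℂ} (hx : x ∈ s)
    {f g : ℂ → ℂ} (hf : AnalyticOnNhd ℂ f s) (hg : AnalyticOnNhd ℂ g s) (n : ℕ) :
    iteratedDeriv n (fun w => f w - g w) x = iteratedDeriv n f x - iteratedDeriv n g x := by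
  rw [← iteratedDerivWithin_isOpen hs hx, ← iteratedDerivWithin_isOpen hs hx f,
    ← iteratedDerivWithin_isOpen hs hx g]
  exact iteratedDerivWithin_sub hx hs.uniqueDiffOn
    ((hf.analyticOn.contDiffOn hs.uniqueDiffOn) x hx) ((hg.analyticOn.contDiffOn hs.uniqueDiffOn) x hx)

private lemma iteratedDeriv_mul_vanish {s : Set ℂ} (hs : IsOpen s) {a : ℂ} (ha : a ∈ s) :
    ∀ (j : ℕ) (χ ψ : ℂ → ℂ), AnalyticOnNhd ℂ χ s → AnalyticOnNhd ℂ ψ s →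
      (∀ i, i ≤ j → iteratedDeriv i ψ a = 0) →
      iteratedDeriv j (fun w => χ w * ψ w) a = 0
  | 0, χ, ψ, hχ, hψ, hvan => by
      simp only [iteratedDeriv_zero]
      rw [show ψ a = 0 from by simpa using hvan 0 le_rfl, mul_zero]
  | (j+1), χ, ψ, hχ, hψ, hvan => by
      rw [iteratedDeriv_succ']
      have hEq : Set.EqOn (deriv fun w => χ w * ψ w)
          (fun w => (deriv χ w * ψ w) + (χ w * deriv ψ w)) s := fun w hw =>
        deriv_mul ((hχ w hw).differentiableAt) ((hψ w hw).differentiableAt)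
      rw [hEq.iteratedDeriv_of_isOpen hs j ha]
      rw [iteratedDeriv_add_an hs ha ((hχ.deriv).mul hψ) (hχ.mul hψ.deriv) j]
      have h1 := iteratedDeriv_mul_vanish hs ha j (deriv χ) ψ hχ.deriv hψ
        (fun i hi => hvan i (hi.trans (Nat.le_succ j)))
      have h2 := iteratedDeriv_mul_vanish hs ha j χ (deriv ψ) hχ hψ.deriv
        (fun i hi => by
          have : iteratedDeriv (i+1) ψ a = 0 := hvan (i+1) (Nat.succ_le_succ hi)
          rwa [iteratedDeriv_succ'] at this)
      rw [h1, h2, add_zero]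

private lemma key_dvd (u h : Polynomial ℂ) (a : ℂ) (ha : h.eval a ≠ 0) (m : ℕ) (co : ℕ → ℂ)
    (hco : ∀ j, co j = (1 / (j.factorial : ℂ)) *
      iteratedDeriv j (fun w => u.eval w / h.eval w) a) :
    (X - C a) ^ m ∣ u - h * ∑ i ∈ Finset.range m, C (co i) * (X - C a) ^ i := by
  classical
  set s : Set ℂ := (fun w => h.eval w) ⁻¹' {0}ᶜ with hsdef
  have hopen : IsOpen s := IsOpen.preimage h.continuous isOpen_compl_singleton
  have has : a ∈ s := by simpa [hsdef] using ha
  set g : ℂ → ℂ := fun w => u.eval w / h.eval w with hg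
  have hgan : AnalyticOnNhd ℂ g s := fun x hx =>
    AnalyticAt.div (analyticOnNhd_polyEval u s x hx) (analyticOnNhd_polyEval h s x hx)
      (by simpa [hsdef] using hx)
  set T : ℂ[X] := ∑ i ∈ Finset.range m, C (co i) * (X - C a) ^ i with hT
  set ψ : ℂ → ℂ := fun w => g w - T.eval w with hψ
  have hψan : AnalyticOnNhd ℂ ψ s := hgan.sub (analyticOnNhd_polyEval T s)
  have hgder : ∀ j, iteratedDeriv j g a = (j.factorial : ℂ) * co j := by
    intro j
    rw [hco j]
    have : (j.factorial : ℂ) ≠ 0 := Nat.cast_ne_zero.mpr j.factorial_ne_zero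
    field_simp
  have hψvan : ∀ j, j < m → iteratedDeriv j ψ a = 0 := by
    intro j hj
    have h1 : iteratedDeriv j ψ a = iteratedDeriv j g a - iteratedDeriv j (fun w => T.eval w) a :=
      iteratedDeriv_sub_an hopen has hgan (analyticOnNhd_polyEval T s) j
    rw [h1, hgder j, iteratedDeriv_polyEval]
    have h2 : ((⇑derivative)^[j] T).eval a = (j.factorial : ℂ) * co j := by
      rw [hT]; exact iterated_deriv_taylor_poly a m co j hj
    simp only []
    rw [h2, sub_self]
  have hEq : Set.EqOn (fun w => (u - h * T).eval w) (fun w => h.eval w * ψ w) s := by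
    intro w hw
    have hw0 : h.eval w ≠ 0 := by simpa [hsdef] using hw
    simp only [hψ, hg, Polynomial.eval_sub, Polynomial.eval_mul]
    field_simp
  apply dvd_of_iterated_deriv_eval_zero
  intro j hj
  have h1 : ((⇑derivative)^[j] (u - h * T)).eval a
      = iteratedDeriv j (fun w => (u - h * T).eval w) a := by
    rw [iteratedDeriv_polyEval]
  rw [h1, hEq.iteratedDeriv_of_isOpen hopen j has]
  exact iteratedDeriv_mul_vanish hopen has j _ ψ (analyticOnNhd_polyEval h s) hψan
    (fun i hi => hψvan i (lt_of_le_of_lt hi hj))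

private lemma neg_one_sq_pow (a : ℕ) : (-1 : ℂ) ^ a * (-1 : ℂ) ^ a = 1 := by
  rw [← pow_add]
  exact Even.neg_one_pow ⟨a, rfl⟩

private lemma degree_term_le (cc a : ℂ) (j : ℕ) :
    (C cc * (X - C a) ^ j).degree ≤ (j : WithBot ℕ) := by
  calc (C cc * (X - C a) ^ j).degree ≤ (C cc).degree + ((X - C a) ^ j).degree :=
        degree_mul_le _ _
    _ ≤ 0 + (j : WithBot ℕ) * 1 :=
        add_le_add degree_C_le (degree_pow_le_of_le j (le_of_eq (degree_X_sub_C a)))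
    _ = (j : WithBot ℕ) := by simp

private lemma degree_comp_neg_lt (B : ℂ[X]) (N : ℕ) (h : B.degree < (N : ℕ)) :
    (B.comp (-X)).degree < (N : ℕ) := by
  by_cases hB : B = 0
  · rw [hB, zero_comp, degree_zero]
    exact WithBot.bot_lt_coe _
  · have h1 : (B.comp (-X)).degree ≤ (B.natDegree : WithBot ℕ) := by
      refine le_trans (degree_le_natDegree) ?_
      have h2 : (B.comp (-X)).natDegree ≤ B.natDegree := by
        refine le_trans natDegree_comp_le ?_
        rw [natDegree_neg, natDegree_X, mul_one]
      exact_mod_cast h2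
    rw [← degree_eq_natDegree hB] at h1
    exact lt_of_le_of_lt h1 h

private lemma comp_neg_prod_sub {ι : Type*} (s : Finset ι) (a : ι → ℂ) (k : ι → ℕ) :
    (∏ j ∈ s, (X - C (a j)) ^ (k j)).comp (-X)
      = C ((-1 : ℂ) ^ (∑ j ∈ s, k j)) * ∏ j ∈ s, (X + C (a j)) ^ (k j) := by
  rw [Polynomial.prod_comp]
  have h1 : ∀ j ∈ s, ((X - C (a j)) ^ (k j)).comp (-X)
      = (-1 : ℂ[X]) ^ (k j) * (X + C (a j)) ^ (k j) := by
    intro j _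
    rw [Polynomial.pow_comp, Polynomial.sub_comp, Polynomial.X_comp, Polynomial.C_comp, ← neg_pow]
    congr 1
    ring
  rw [Finset.prod_congr rfl h1, Finset.prod_mul_distrib, Finset.prod_pow_eq_pow_sum]
  congr 1
  rw [show (-1 : ℂ[X]) = C (-1 : ℂ) from by simp, ← C_pow]

private lemma comp_neg_prod_add {ι : Type*} (s : Finset ι) (a : ι → ℂ) (k : ι → ℕ) :
    (∏ j ∈ s, (X + C (a j)) ^ (k j)).comp (-X)
      = C ((-1 : ℂ) ^ (∑ j ∈ s, k j)) * ∏ j ∈ s, (X - C (a j)) ^ (k j) := by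
  rw [Polynomial.prod_comp]
  have h1 : ∀ j ∈ s, ((X + C (a j)) ^ (k j)).comp (-X)
      = (-1 : ℂ[X]) ^ (k j) * (X - C (a j)) ^ (k j) := by
    intro j _
    rw [Polynomial.pow_comp, Polynomial.add_comp, Polynomial.X_comp, Polynomial.C_comp, ← neg_pow]
    congr 1
    ring
  rw [Finset.prod_congr rfl h1, Finset.prod_mul_distrib, Finset.prod_pow_eq_pow_sum]
  congr 1
  rw [show (-1 : ℂ[X]) = C (-1 : ℂ) from by simp, ← C_pow]

private lemma natDegree_prod_sub {ι : Type*} (s : Finset ι) (a : ι → ℂ) (k : ι → ℕ) :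
    (∏ j ∈ s, (X - C (a j)) ^ (k j)).natDegree = ∑ j ∈ s, k j := by
  rw [natDegree_prod _ _ (fun j _ => pow_ne_zero _ (X_sub_C_ne_zero _))]
  refine Finset.sum_congr rfl fun j _ => ?_
  rw [natDegree_pow, natDegree_X_sub_C, mul_one]

private lemma natDegree_prod_add {ι : Type*} (s : Finset ι) (a : ι → ℂ) (k : ι → ℕ) :
    (∏ j ∈ s, (X + C (a j)) ^ (k j)).natDegree = ∑ j ∈ s, k j := by
  rw [natDegree_prod _ _ (fun j _ => pow_ne_zero _ (X_add_C_ne_zero _))]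
  refine Finset.sum_congr rfl fun j _ => ?_
  rw [natDegree_pow, natDegree_X_add_C, mul_one]

private lemma sum_Icc_reindex {MM : Type*} [AddCommMonoid MM] (m : ℕ) (F : ℕ → MM) :
    ∑ s ∈ Finset.Icc 1 m, F (m - s) = ∑ j ∈ Finset.range m, F j := by
  refine Finset.sum_bij' (fun s _ => m - s) (fun j _ => m - j)
    (fun a ha => Finset.mem_range.mpr (by rw [Finset.mem_Icc] at ha; show m - a < m; omega))
    (fun a ha => Finset.mem_Icc.mpr (by rw [Finset.mem_range] at ha; show 1 ≤ m - a ∧ m - a ≤ m; omega))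
    (fun a ha => by rw [Finset.mem_Icc] at ha; show m - (m - a) = a; omega)
    (fun a ha => by rw [Finset.mem_range] at ha; show m - (m - a) = a; omega)
    (fun a _ => rfl)

/-- Root-based representation of the unique degree-`<n` solution of the
generalized Bezout equation `â(z)p(z) ⋆ â(-z)p(-z) = 2z^{2t-ℓ^⋆}` via (incomplete)
partial fraction coefficients at the roots (with reversed signs) of `â`. -/
theorem bezout_solution_partial_fraction_representation
    (M n t : ℕ) (ht : 1 ≤ t) (htn : t ≤ n)
    (an : ℂ) (han : an ≠ 0)
    (z : Fin (M + 1) → ℂ) (hz : Function.Injective z)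
    (k : Fin (M + 1) → ℕ) (hk : ∑ j, k j = n)
    (ahat : Polynomial ℂ) (hahat : ahat = C an * ∏ j, (X - C (z j)) ^ (k j))
    (hcop : IsCoprime ahat (ahat.comp (-X)))
    (ε : ℂ) (ℓ : ℕ) (hstar : (ε = 1 ∧ ℓ = 2) ∨ (ε = -1 ∧ ℓ = 1))
    (p : Polynomial ℂ) (hpdeg : p.degree < (n : ℕ))
    (hpeq : ahat * p + C ε * ((ahat.comp (-X)) * (p.comp (-X))) = C 2 * X ^ (2 * t - ℓ))
    (ω : Polynomial ℂ)
    (hω : ω = (∏ j, (X - C (z j)) ^ (k j)) * ∏ j, (X + C (z j)) ^ (k j))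
    (ωi : Fin (M + 1) → Polynomial ℂ)
    (hωi : ∀ i, ωi i = ω / (X - C (z i)) ^ (k i))
    (c : Fin (M + 1) → ℕ → ℂ)
    (hc : ∀ i j, c i j = (1 / (Nat.factorial j : ℂ)) *
      iteratedDeriv j (fun w : ℂ => 2 * w ^ (2 * t - ℓ) / (ωi i).eval w) (z i)) :
    ∀ w : ℂ, (∀ i, w ≠ -(z i)) →
      p.eval w = (-1 : ℂ) ^ ℓ * an⁻¹ * (∏ j, (w + z j) ^ (k j)) *
        ∑ i, ∑ s ∈ Finset.Icc 1 (k i), (-1 : ℂ) ^ s * c i (k i - s) / (w + z i) ^ s := by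
  classical
  have hεval : ε = (-1 : ℂ) ^ ℓ := by
    rcases hstar with ⟨h1, h2⟩ | ⟨h1, h2⟩ <;> rw [h1, h2] <;> norm_num
  have hε1 : ε * ε = 1 := by rcases hstar with ⟨h1, _⟩ | ⟨h1, _⟩ <;> rw [h1] <;> norm_num
  have hεC : (C ε) * (C ε) = (1 : ℂ[X]) := by rw [← C_mul, hε1, map_one]
  have hεne : ε ≠ 0 := by rcases hstar with ⟨h1, _⟩ | ⟨h1, _⟩ <;> rw [h1] <;> norm_num
  have hℓ1 : 1 ≤ ℓ := by rcases hstar with ⟨_, h2⟩ | ⟨_, h2⟩ <;> omega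
  have hℓ2t : ℓ ≤ 2 * t := by rcases hstar with ⟨_, h2⟩ | ⟨_, h2⟩ <;> omega
  set e : ℕ := 2 * t - ℓ with he
  set A : ℂ[X] := ∏ j, (X - C (z j)) ^ (k j) with hA
  set Bp : ℂ[X] := ∏ j, (X + C (z j)) ^ (k j) with hBp
  have hsgn : (-1 : ℂ) ^ e = ε := by
    rcases hstar with ⟨h1, h2⟩ | ⟨h1, h2⟩
    · have h3 : e = 2 * (t - 1) := by omega
      rw [h3, pow_mul]; norm_num [h1]
    · have h3 : e = 2 * (t - 1) + 1 := by omega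
      rw [h3, pow_succ, pow_mul]; norm_num [h1]
  have hAmonic : A.Monic := monic_prod_of_monic _ _ fun j _ => (monic_X_sub_C _).pow _
  have hBmonic : Bp.Monic := monic_prod_of_monic _ _ fun j _ => (monic_X_add_C _).pow _
  have hAne : A ≠ 0 := hAmonic.ne_zero
  have hBne : Bp ≠ 0 := hBmonic.ne_zero
  have hAdegn : A.natDegree = n := by rw [hA, natDegree_prod_sub, hk]
  have hBdegn : Bp.natDegree = n := by rw [hBp, natDegree_prod_add, hk]
  have hacomp : ahat.comp (-X) = C (an * (-1 : ℂ) ^ n) * Bp := by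
    rw [hahat, mul_comp, C_comp, hA, comp_neg_prod_sub, hk, ← hBp, ← mul_assoc, ← C_mul]
  have hAcomp : A.comp (-X) = C ((-1 : ℂ) ^ n) * Bp := by
    rw [hA, comp_neg_prod_sub, hk, ← hBp]
  have hBcomp : Bp.comp (-X) = C ((-1 : ℂ) ^ n) * A := by
    rw [hBp, comp_neg_prod_add, hk, ← hA]
  -- roots interplay
  have hzz : ∀ i j, 1 ≤ k i → 1 ≤ k j → z i + z j ≠ 0 := by
    intro i j hi hj hzij
    obtain ⟨uu, vv, huv⟩ := hcop
    have h1 : ahat.eval (z i) = 0 := by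
      rw [hahat, eval_mul, eval_prod]
      have : ((X - C (z i)) ^ (k i) : ℂ[X]).eval (z i) = 0 := by
        rw [eval_pow, eval_sub, eval_X, eval_C, sub_self, zero_pow (by omega)]
      rw [Finset.prod_eq_zero (Finset.mem_univ i) this, mul_zero]
    have h2 : (ahat.comp (-X)).eval (z i) = 0 := by
      rw [eval_comp, eval_neg, eval_X, hahat, eval_mul, eval_prod]
      have : ((X - C (z j)) ^ (k j) : ℂ[X]).eval (-(z i)) = 0 := by
        have hzji : -(z i) = z j := by
          linear_combination - hzij
        rw [eval_pow, eval_sub, eval_X, eval_C, hzji, sub_self, zero_pow (by omega)]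
      rw [Finset.prod_eq_zero (Finset.mem_univ j) this, mul_zero]
    have h3 := congrArg (fun q : ℂ[X] => q.eval (z i)) huv
    simp only [eval_add, eval_mul, eval_one, h1, h2, mul_zero, add_zero, zero_add] at h3
    exact one_ne_zero h3.symm
  -- ωi explicit
  set ωiE : Fin (M + 1) → ℂ[X] :=
    fun i => (∏ j ∈ Finset.univ.erase i, (X - C (z j)) ^ (k j)) * Bp with hωiE
  have hAsplit : ∀ i : Fin (M + 1),
      A = (X - C (z i)) ^ (k i) * ∏ j ∈ Finset.univ.erase i, (X - C (z j)) ^ (k j) := by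
    intro i
    rw [hA, ← Finset.mul_prod_erase _ _ (Finset.mem_univ i)]
  have hωiE' : ∀ i, ωi i = ωiE i := by
    intro i
    rw [hωi i, hω, hAsplit i, mul_assoc,
      ← divByMonic_eq_div _ ((monic_X_sub_C _).pow _),
      mul_divByMonic_cancel_left _ ((monic_X_sub_C _).pow _)]
  have hkisum : ∀ i : Fin (M + 1), (∑ j ∈ Finset.univ.erase i, k j) + k i = n := by
    intro i
    rw [← hk, add_comm]
    exact Finset.add_sum_erase _ _ (Finset.mem_univ i)
  set T : Fin (M + 1) → ℂ[X] :=
    fun i => ∑ j ∈ Finset.range (k i), C (c i j) * (X - C (z i)) ^ j with hT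
  set Bq : ℂ[X] := ∑ i, ωiE i * T i with hBq
  -- key divisibility from the analytic facts
  have hωiEval : ∀ i : Fin (M + 1), 1 ≤ k i → (ωiE i).eval (z i) ≠ 0 := by
    intro i hki
    simp only [hωiE, hBp, eval_mul, eval_prod, eval_pow, eval_sub, eval_add, eval_X, eval_C]
    apply mul_ne_zero
    · rw [Finset.prod_ne_zero_iff]
      intro j hj
      refine pow_ne_zero _ (sub_ne_zero.mpr fun hzz' => Finset.ne_of_mem_erase hj (hz ?_))
      exact hzz'.symm
    · rw [Finset.prod_ne_zero_iff]
      intro j _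
      rcases Nat.eq_zero_or_pos (k j) with h0 | h1
      · rw [h0, pow_zero]; exact one_ne_zero
      · exact pow_ne_zero _ (hzz i j hki h1)
  have hkey : ∀ i : Fin (M + 1), (X - C (z i)) ^ (k i) ∣ (C 2 * X ^ e - ωiE i * T i) := by
    intro i
    rcases Nat.eq_zero_or_pos (k i) with h0 | h1
    · rw [h0, pow_zero]; exact one_dvd _
    · have hfun : (fun w : ℂ => 2 * w ^ e / (ωi i).eval w)
          = fun w : ℂ => (C 2 * X ^ e : ℂ[X]).eval w / (ωiE i).eval w := by
        funext w
        rw [hωiE' i]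
        simp
      have hco : ∀ j, c i j = (1 / (j.factorial : ℂ)) *
          iteratedDeriv j (fun w => (C 2 * X ^ e : ℂ[X]).eval w / (ωiE i).eval w) (z i) := by
        intro j
        rw [hc i j, hfun]
      exact key_dvd (C 2 * X ^ e) (ωiE i) (z i) (hωiEval i h1) (k i) (c i) hco
  set D : ℂ[X] := C 2 * X ^ e - Bq - C ε * Bq.comp (-X) with hD
  have hApow_dvd : ∀ i : Fin (M + 1), (X - C (z i)) ^ (k i) ∣ A := by
    intro i
    rw [hAsplit i]
    exact dvd_mul_right _ _
  have hBqcomp_dvd : ∀ i : Fin (M + 1), (X - C (z i)) ^ (k i) ∣ Bq.comp (-X) := by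
    intro i
    rw [hBq, sum_comp]
    apply Finset.dvd_sum
    intro j _
    rw [mul_comp]
    simp only [hωiE]
    rw [mul_comp, hBcomp]
    have h2 : (X - C (z i)) ^ (k i) ∣ C ((-1 : ℂ) ^ n) * A := (hApow_dvd i).mul_left _
    exact dvd_mul_of_dvd_left (dvd_mul_of_dvd_right h2 _) _
  have hAdvd : A ∣ D := by
    rw [hA]
    apply Finset.prod_dvd_of_coprime
    · intro i _ j _ hij
      exact ((Polynomial.pairwise_coprime_X_sub_C hz hij).pow)
    · intro i _
      have h1 : (X - C (z i)) ^ (k i) ∣ C 2 * X ^ e - ωiE i * T i := hkey i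
      have h2 : (X - C (z i)) ^ (k i) ∣ Bq - ωiE i * T i := by
        have hBsplit : Bq - ωiE i * T i = ∑ j ∈ Finset.univ.erase i, ωiE j * T j := by
          rw [hBq, ← Finset.add_sum_erase _ _ (Finset.mem_univ i)]
          ring
        rw [hBsplit]
        apply Finset.dvd_sum
        intro j hj
        simp only [hωiE]
        have hmem : i ∈ Finset.univ.erase j := by
          rw [Finset.mem_erase]
          exact ⟨(Finset.ne_of_mem_erase hj).symm, Finset.mem_univ i⟩
        have h3 : (X - C (z i)) ^ (k i) ∣ ∏ l ∈ Finset.univ.erase j, (X - C (z l)) ^ (k l) :=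
          Finset.dvd_prod_of_mem _ hmem
        exact dvd_mul_of_dvd_left (dvd_mul_of_dvd_left h3 _) _
      have h3 : (X - C (z i)) ^ (k i) ∣ C ε * Bq.comp (-X) := (hBqcomp_dvd i).mul_left _
      have hDsplit : D = (C 2 * X ^ e - ωiE i * T i) - (Bq - ωiE i * T i) - C ε * Bq.comp (-X) := by
        rw [hD]; ring
      rw [hDsplit]
      exact dvd_sub (dvd_sub h1 h2) h3
  have hXX : ((-X : ℂ[X]).comp (-X)) = X := by rw [neg_comp, X_comp, neg_neg]
  have hnegpow : (-X : ℂ[X]) ^ e = C ε * X ^ e := by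
    rw [neg_pow, show (-1 : ℂ[X]) = C (-1 : ℂ) from by simp, ← C_pow, hsgn]
  have hDcomp : D.comp (-X) = C ε * D := by
    have hBB : (Bq.comp (-X)).comp (-X) = Bq := by
      rw [comp_assoc, hXX, comp_X]
    have hεBB : C ε * (C ε * Bq.comp (-X)) = Bq.comp (-X) := by
      rw [← mul_assoc, hεC, one_mul]
    rw [hD, mul_sub, mul_sub, hεBB, sub_comp, sub_comp, mul_comp, mul_comp, C_comp, C_comp,
      pow_comp, X_comp, hBB, hnegpow]
    ring
  have hBpdvd : Bp ∣ D := by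
    obtain ⟨q, hq⟩ := hAdvd
    have h1 : Bp ∣ D.comp (-X) := by
      rw [hq, mul_comp, hAcomp]
      exact dvd_mul_of_dvd_left (dvd_mul_left Bp _) _
    rw [hDcomp] at h1
    have h2 := h1.mul_left (C ε)
    rwa [← mul_assoc, hεC, one_mul] at h2
  have hABcop : IsCoprime A Bp := by
    have h1 : A ∣ ahat := by rw [hahat]; exact Dvd.intro_left _ rfl
    have h2 : Bp ∣ ahat.comp (-X) := by rw [hacomp]; exact Dvd.intro_left _ rfl
    exact (hcop.of_isCoprime_of_dvd_left h1).of_isCoprime_of_dvd_right h2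
  have hTdeg : ∀ i : Fin (M + 1), (T i).degree < ((k i : ℕ) : WithBot ℕ) := by
    intro i
    simp only [hT]
    apply lt_of_le_of_lt (degree_sum_le _ _)
    rw [Finset.sup_lt_iff (WithBot.bot_lt_coe _)]
    intro j hj
    apply lt_of_le_of_lt (degree_term_le _ _ _)
    exact_mod_cast Finset.mem_range.mp hj
  have hωiEdeg : ∀ i : Fin (M + 1),
      (ωiE i).degree = (((∑ j ∈ Finset.univ.erase i, k j) + n : ℕ) : WithBot ℕ) := by
    intro i
    have hne : (∏ j ∈ Finset.univ.erase i, (X - C (z j)) ^ (k j) : ℂ[X]) ≠ 0 :=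
      (monic_prod_of_monic _ _ fun j _ => (monic_X_sub_C _).pow _).ne_zero
    have h1 : (ωiE i) ≠ 0 := mul_ne_zero hne hBne
    rw [degree_eq_natDegree h1]
    congr 1
    simp only [hωiE]
    rw [natDegree_mul hne hBne, natDegree_prod_sub, hBdegn]
  have hsum_term_deg : ∀ i : Fin (M + 1), (ωiE i * T i).degree < ((2 * n : ℕ) : WithBot ℕ) := by
    intro i
    rw [degree_mul, hωiEdeg i]
    have h1 := WithBot.add_lt_add_left
      (show (((∑ j ∈ Finset.univ.erase i, k j) + n : ℕ) : WithBot ℕ) ≠ ⊥ from WithBot.coe_ne_bot)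
      (hTdeg i)
    apply lt_of_lt_of_le h1
    rw [← Nat.cast_add]
    have h2 : (∑ j ∈ Finset.univ.erase i, k j) + n + k i = 2 * n := by
      have := hkisum i; omega
    rw [h2]
  have hBqdeg : Bq.degree < ((2 * n : ℕ) : WithBot ℕ) := by
    rw [hBq]
    apply lt_of_le_of_lt (degree_sum_le _ _)
    rw [Finset.sup_lt_iff (WithBot.bot_lt_coe _)]
    intro i _
    exact hsum_term_deg i
  have hDdeg : D.degree < (A * Bp).degree := by
    have hABdeg : (A * Bp).degree = ((2 * n : ℕ) : WithBot ℕ) := by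
      rw [degree_mul, degree_eq_natDegree hAne, degree_eq_natDegree hBne, hAdegn, hBdegn,
        ← Nat.cast_add]
      congr 1
      omega
    rw [hABdeg, hD]
    apply lt_of_le_of_lt (degree_sub_le _ _)
    rw [max_lt_iff]
    constructor
    · apply lt_of_le_of_lt (degree_sub_le _ _)
      rw [max_lt_iff]
      constructor
      · rw [degree_C_mul_X_pow e (two_ne_zero)]
        exact_mod_cast (show e < 2 * n by omega)
      · exact hBqdeg
    · rw [degree_mul, degree_C hεne, zero_add]
      exact degree_comp_neg_lt Bq (2 * n) hBqdeg
  have hD0 : D = 0 := eq_zero_of_dvd_of_degree_lt (hABcop.mul_dvd hAdvd hBpdvd) hDdeg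
  have hBident : Bq + C ε * Bq.comp (-X) = C 2 * X ^ e := by
    rw [hD] at hD0
    rw [sub_sub, sub_eq_zero] at hD0
    exact hD0.symm
  -- the candidate solution
  set Q : ℂ[X] := ∑ i, (∏ j ∈ Finset.univ.erase i, (X - C (z j)) ^ (k j)) * T i with hQ
  have hBqQ : Bq = Bp * Q := by
    rw [hBq, hQ, Finset.mul_sum]
    refine Finset.sum_congr rfl fun i _ => ?_
    simp only [hωiE]
    ring
  set P : ℂ[X] := C (ε * (-1 : ℂ) ^ n * an⁻¹) * Q.comp (-X) with hP
  have hPcomp : P.comp (-X) = C (ε * (-1 : ℂ) ^ n * an⁻¹) * Q := by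
    rw [hP, mul_comp, C_comp, comp_assoc, hXX, comp_X]
  have hPcompB : ahat.comp (-X) * P.comp (-X) = C ε * Bq := by
    rw [hacomp, hPcomp, hBqQ]
    rw [show C (an * (-1 : ℂ) ^ n) * Bp * (C (ε * (-1 : ℂ) ^ n * an⁻¹) * Q)
        = (C (an * (-1 : ℂ) ^ n) * C (ε * (-1 : ℂ) ^ n * an⁻¹)) * (Bp * Q) from by ring]
    congr 1
    rw [← C_mul]
    congr 1
    have h1 : an * (-1 : ℂ) ^ n * (ε * (-1 : ℂ) ^ n * an⁻¹)
        = (an * an⁻¹) * ((-1 : ℂ) ^ n * (-1 : ℂ) ^ n) * ε := by ring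
    rw [h1, mul_inv_cancel₀ han, neg_one_sq_pow, one_mul, one_mul]
  have hPeq : ahat * P + C ε * (ahat.comp (-X) * P.comp (-X)) = C 2 * X ^ e := by
    have h1 : ahat * P = C ε * Bq.comp (-X) := by
      have h2 := congrArg (fun q : ℂ[X] => q.comp (-X)) hPcompB
      simp only [mul_comp, C_comp] at h2
      rw [comp_assoc, comp_assoc, hXX, comp_X, comp_X] at h2
      exact h2
    rw [h1, hPcompB, ← mul_assoc, hεC, one_mul, add_comm]
    exact hBident
  -- degree of P
  have hQdeg : Q.degree < ((n : ℕ) : WithBot ℕ) := by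
    rw [hQ]
    apply lt_of_le_of_lt (degree_sum_le _ _)
    rw [Finset.sup_lt_iff (WithBot.bot_lt_coe _)]
    intro i _
    rw [degree_mul]
    have hne : (∏ j ∈ Finset.univ.erase i, (X - C (z j)) ^ (k j) : ℂ[X]) ≠ 0 :=
      (monic_prod_of_monic _ _ fun j _ => (monic_X_sub_C _).pow _).ne_zero
    rw [degree_eq_natDegree hne, natDegree_prod_sub]
    have h1 := WithBot.add_lt_add_left
      (show ((∑ j ∈ Finset.univ.erase i, k j : ℕ) : WithBot ℕ) ≠ ⊥ from WithBot.coe_ne_bot)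
      (hTdeg i)
    apply lt_of_lt_of_le h1
    rw [← Nat.cast_add, hkisum i]
  have hPdeg : P.degree < ((n : ℕ) : WithBot ℕ) := by
    rw [hP]
    apply lt_of_le_of_lt (degree_mul_le _ _)
    apply lt_of_le_of_lt (add_le_add degree_C_le (le_refl (Q.comp (-X)).degree))
    rw [zero_add]
    exact degree_comp_neg_lt Q n hQdeg
  -- uniqueness
  have hdeg_ahat : ahat.degree = ((n : ℕ) : WithBot ℕ) := by
    rw [hahat, degree_mul, degree_C han, zero_add, degree_eq_natDegree hAne, hAdegn]
  have hpP : p = P := by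
    have heq2 : ahat * p + C ε * (ahat.comp (-X) * p.comp (-X))
        = ahat * P + C ε * (ahat.comp (-X) * P.comp (-X)) := by rw [hpeq, hPeq]
    have hsub : ahat * (p - P) = -(C ε * (ahat.comp (-X) * ((p - P).comp (-X)))) := by
      rw [sub_comp]
      linear_combination heq2
    have hdvd1 : ahat ∣ ahat.comp (-X) * (p - P).comp (-X) := by
      have h1 : ahat ∣ ahat * (p - P) := dvd_mul_right _ _
      rw [hsub, dvd_neg] at h1
      have h2 := h1.mul_left (C ε)
      rwa [← mul_assoc, hεC, one_mul] at h2
    have hdvd2 : ahat ∣ (p - P).comp (-X) := hcop.dvd_of_dvd_mul_left hdvd1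
    have hsubdeg : ((p - P).comp (-X)).degree < ahat.degree := by
      rw [hdeg_ahat]
      exact degree_comp_neg_lt _ n (lt_of_le_of_lt (degree_sub_le _ _) (max_lt hpdeg hPdeg))
    have h0 : (p - P).comp (-X) = 0 := eq_zero_of_dvd_of_degree_lt hdvd2 hsubdeg
    have h1 : p - P = 0 := by
      have h2 := congrArg (fun q : ℂ[X] => q.comp (-X)) h0
      simp only [zero_comp] at h2
      rwa [comp_assoc, hXX, comp_X] at h2
    have := sub_eq_zero.mp h1
    exact this
  -- final evaluation
  intro w hw
  have hvne : ∀ i, w + z i ≠ 0 := fun i h => hw i (by linear_combination h)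
  set d : Fin (M + 1) → ℕ := fun i => ∑ j ∈ Finset.univ.erase i, k j with hd
  have hsign : ∀ (i : Fin (M + 1)) (s : ℕ), 1 ≤ s → s ≤ k i →
      ε * (-1 : ℂ) ^ n * (-1 : ℂ) ^ (d i) * (-1 : ℂ) ^ (k i - s)
        = (-1 : ℂ) ^ ℓ * (-1 : ℂ) ^ s := by
    intro i s hs1 hs2
    have hn' : n = d i + (k i - s) + s := by
      have := hkisum i
      simp only [hd]
      omega
    rw [hn', pow_add, pow_add]
    rw [show ε * ((-1 : ℂ) ^ (d i) * (-1 : ℂ) ^ (k i - s) * (-1 : ℂ) ^ s) * (-1 : ℂ) ^ (d i) *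
          (-1 : ℂ) ^ (k i - s)
        = ε * ((-1 : ℂ) ^ (d i) * (-1 : ℂ) ^ (d i)) * ((-1 : ℂ) ^ (k i - s) * (-1 : ℂ) ^ (k i - s))
          * (-1 : ℂ) ^ s from by ring]
    rw [neg_one_sq_pow, neg_one_sq_pow, mul_one, mul_one, hεval]
  rw [hpP, hP]
  rw [eval_mul, eval_C, eval_comp, eval_neg, eval_X, hQ]
  rw [eval_finset_sum]
  rw [Finset.mul_sum, Finset.mul_sum]
  refine Finset.sum_congr rfl fun i _ => ?_
  rw [eval_mul, eval_prod, eval_finset_sum]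
  have hprod_erase : ∏ j ∈ Finset.univ.erase i, (((X - C (z j)) ^ (k j) : ℂ[X])).eval (-w)
      = (-1 : ℂ) ^ (d i) * ∏ j ∈ Finset.univ.erase i, (w + z j) ^ (k j) := by
    have h1 : ∀ j ∈ Finset.univ.erase i, (((X - C (z j)) ^ (k j) : ℂ[X])).eval (-w)
        = (-1 : ℂ) ^ (k j) * (w + z j) ^ (k j) := by
      intro j _
      rw [eval_pow, eval_sub, eval_X, eval_C, ← neg_pow]
      congr 1
      ring
    rw [Finset.prod_congr rfl h1, Finset.prod_mul_distrib, Finset.prod_pow_eq_pow_sum, hd]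
  have hsum_eval : ∑ j ∈ Finset.range (k i), (((C (c i j) * (X - C (z i)) ^ j) : ℂ[X])).eval (-w)
      = ∑ s ∈ Finset.Icc 1 (k i), c i (k i - s) * ((-1 : ℂ) ^ (k i - s) * (w + z i) ^ (k i - s)) := by
    have h1 : ∑ j ∈ Finset.range (k i), (((C (c i j) * (X - C (z i)) ^ j) : ℂ[X])).eval (-w)
        = ∑ j ∈ Finset.range (k i), c i j * ((-1 : ℂ) ^ j * (w + z i) ^ j) := by
      refine Finset.sum_congr rfl fun s _ => ?_
      rw [eval_mul, eval_C, eval_pow, eval_sub, eval_X, eval_C, ← neg_pow]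
      congr 2
      ring
    rw [h1]
    exact (sum_Icc_reindex (k i) (fun j => c i j * ((-1 : ℂ) ^ j * (w + z i) ^ j))).symm
  rw [hprod_erase, hsum_eval]
  rw [Finset.mul_sum, Finset.mul_sum, Finset.mul_sum]
  refine Finset.sum_congr rfl fun s hs => ?_
  obtain ⟨hs1, hs2⟩ := Finset.mem_Icc.mp hs
  have hfull : ∏ j, (w + z j) ^ (k j) = (w + z i) ^ (k i) * ∏ j ∈ Finset.univ.erase i, (w + z j) ^ (k j) :=
    (Finset.mul_prod_erase _ _ (Finset.mem_univ i)).symm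
  have hpow : (w + z i) ^ (k i) = (w + z i) ^ (k i - s) * (w + z i) ^ s := by
    rw [← pow_add, Nat.sub_add_cancel hs2]
  rw [hfull, hpow]
  have hsgn2 := hsign i s hs1 hs2
  field_simp
  rw [eq_div_iff (pow_ne_zero _ (hvne i))]
  linear_combination (c i (k i - s) * (w + z i) ^ (k i - s) * (w + z i) ^ s *
    (∏ j ∈ Finset.univ.erase i, (w + z j) ^ (k j))) * hsgn2
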